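/- Let f : ℝ → ℝ be continuous, t ∈ ℝ, σ ∈ (0,1), and suppose there exist C > 0 and ρ > 0 such that |f(u) − f(v)| ≤ C|u − v|^σ (|u − t| + |v − t|)^{−1} for all u, v ∈ B(t,ρ) with (u,v) ≠ (t,t). Then the local upper box dimension of the graph of f at t satisfies lim_{r→0⁺} limsup_{δ→0⁺} log N_δ(Gr(f, [t−r, t+r]))/(−log δ) ≤ 2 − σ; in particular the corresponding local lower box dimension is also at most 2 − σ. -/

import Mathlib

open Filter MeasureTheory Set Topology

/-- The graph of `f : ℝ → ℝ` over `V ⊆ ℝ`, as a subset of the Euclidean plane. -/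
def graphE (f : ℝ → ℝ) (V : Set ℝ) : Set (EuclideanSpace ℝ (Fin 2)) :=
  {p | ∃ u ∈ V, p = ![u, f u]}

/-- `coverNum S δ` is the smallest number of sets of (Euclidean) diameter at most `δ`
needed to cover `S` (with the junk value `0` if no finite cover exists). -/
noncomputable def coverNum (S : Set (EuclideanSpace ℝ (Fin 2))) (δ : ℝ) : ℕ :=
  sInf {n : ℕ | ∃ U : Fin n → Set (EuclideanSpace ℝ (Fin 2)),
    S ⊆ ⋃ i, U i ∧ ∀ i, Metric.diam (U i) ≤ δ}

/-- The local upper box dimension of the graph of `f` at `t`: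
`lim_{r→0⁺} limsup_{δ→0⁺} log N_δ(Gr(f,[t−r,t+r]))/(−log δ)`; since the inner quantity is
nondecreasing in `r`, the limit is the infimum over `r > 0` (computed in `EReal`). -/
noncomputable def upperBoxLoc (f : ℝ → ℝ) (t : ℝ) : EReal :=
  ⨅ (r : ℝ) (_ : 0 < r),
    Filter.limsup (fun δ : ℝ =>
      ((Real.log (coverNum (graphE f (Icc (t - r) (t + r))) δ) / (-Real.log δ) : ℝ) : EReal))
      (𝓝[>] (0 : ℝ))

/-- The local lower box dimension of the graph of `f` at `t`. -/
noncomputable def lowerBoxLoc (f : ℝ → ℝ) (t : ℝ) : EReal :=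
  ⨅ (r : ℝ) (_ : 0 < r),
    Filter.liminf (fun δ : ℝ =>
      ((Real.log (coverNum (graphE f (Icc (t - r) (t + r))) δ) / (-Real.log δ) : ℝ) : EReal))
      (𝓝[>] (0 : ℝ))

/-! ### Auxiliary machinery -/

/-- An axis-aligned box in the Euclidean plane. -/
def boxE (a b c d : ℝ) : Set (EuclideanSpace ℝ (Fin 2)) :=
  {p | p 0 ∈ Icc a b ∧ p 1 ∈ Icc c d}

lemma diam_boxE {δ a b c d : ℝ} (hδ : 0 ≤ δ) (hab : b - a ≤ δ / 2) (hcd : d - c ≤ δ / 2) :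
    Metric.diam (boxE a b c d) ≤ δ := by
  apply Metric.diam_le_of_forall_dist_le hδ
  rintro p ⟨hp0, hp1⟩ q ⟨hq0, hq1⟩
  have h0 : dist (p 0) (q 0) ≤ δ / 2 := (Real.dist_le_of_mem_Icc hp0 hq0).trans hab
  have h1 : dist (p 1) (q 1) ≤ δ / 2 := (Real.dist_le_of_mem_Icc hp1 hq1).trans hcd
  calc dist p q = Real.sqrt (∑ i, dist (p i) (q i) ^ 2) := EuclideanSpace.dist_eq p q
    _ ≤ Real.sqrt (δ ^ 2) := by
        apply Real.sqrt_le_sqrt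
        rw [Fin.sum_univ_two]
        nlinarith [dist_nonneg (x := p 0) (y := q 0), dist_nonneg (x := p 1) (y := q 1)]
    _ = δ := Real.sqrt_sq hδ

lemma coverNum_le_card {ι : Type} [Fintype ι] {S : Set (EuclideanSpace ℝ (Fin 2))} {δ : ℝ}
    (U : ι → Set (EuclideanSpace ℝ (Fin 2))) (hcov : S ⊆ ⋃ i, U i)
    (hdiam : ∀ i, Metric.diam (U i) ≤ δ) : coverNum S δ ≤ Fintype.card ι := by
  apply Nat.sInf_le
  refine ⟨fun j => U ((Fintype.equivFin ι).symm j), ?_, fun j => hdiam _⟩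
  intro x hx
  obtain ⟨i, hi⟩ := mem_iUnion.mp (hcov hx)
  exact mem_iUnion.mpr ⟨Fintype.equivFin ι i, by simpa using hi⟩

/-- Left endpoint of column `k` (of `2K` columns of width `δ'` centered at `t`). -/
noncomputable def colC (t δ' : ℝ) (K k : ℕ) : ℝ := t + ((k : ℝ) - K) * δ'

/-- Distance multiplier of column `k` from `t`. -/
def colN (K k : ℕ) : ℕ := if K ≤ k then k - K else K - 1 - k

/-- Oscillation bound on column with distance multiplier `n`. -/
noncomputable def colM (C σ δ' : ℝ) (n : ℕ) : ℝ :=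
  if n = 0 then δ' ^ (σ - 1 : ℝ) else C * δ' ^ (σ - 1 : ℝ) / (2 * n)

lemma colM_nonneg {C σ δ' : ℝ} (hC : 0 < C) (hδ' : 0 < δ') (n : ℕ) :
    0 ≤ colM C σ δ' n := by
  unfold colM; split
  · positivity
  · positivity

lemma colC_mem_abs {t δ' : ℝ} (hδ' : 0 < δ') {K : ℕ} (k : Fin (2 * K)) {u : ℝ}
    (hu : u ∈ Icc (colC t δ' K k) (colC t δ' K k + δ')) : |u - t| ≤ K * δ' := by
  obtain ⟨h1, h2⟩ := hu
  have hk : ((k : ℕ) : ℝ) ≤ 2 * (K : ℝ) - 1 := by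
    have h := Nat.le_sub_one_of_lt k.isLt
    have h2 : ((k : ℕ) : ℝ) ≤ ((2 * K - 1 : ℕ) : ℝ) := by exact_mod_cast h
    have hK1 : 1 ≤ 2 * K := by omega
    rw [Nat.cast_sub hK1] at h2
    push_cast at h2 ⊢
    linarith
  have hk0 : (0 : ℝ) ≤ ((k : ℕ) : ℝ) := Nat.cast_nonneg _
  rw [abs_le]
  unfold colC at h1 h2
  constructor <;> nlinarith

lemma colN_mul_le_abs {t δ' : ℝ} (hδ' : 0 < δ') {K : ℕ} (k : Fin (2 * K)) {u : ℝ}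
    (hu : u ∈ Icc (colC t δ' K k) (colC t δ' K k + δ')) :
    (colN K k : ℝ) * δ' ≤ |u - t| := by
  obtain ⟨h1, h2⟩ := hu
  unfold colC at h1 h2
  unfold colN
  by_cases hk : K ≤ (k : ℕ)
  · rw [if_pos hk]
    have hc : ((((k : ℕ) - K : ℕ)) : ℝ) = (k : ℕ) - K := by
      push_cast [Nat.cast_sub hk]; ring
    rw [hc]
    have : ((k : ℕ) : ℝ) - K ≥ 0 := by
      have : (K : ℝ) ≤ (k : ℕ) := by exact_mod_cast hk
      linarith
    have h3 : ((k : ℕ) - K : ℝ) * δ' ≤ u - t := by nlinarith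
    exact h3.trans (le_abs_self _)
  · rw [if_neg hk]
    push_neg at hk
    have hk' : (k : ℕ) ≤ K - 1 := Nat.le_sub_one_of_lt hk
    have hc : (((K - 1 - (k : ℕ) : ℕ)) : ℝ) = K - 1 - (k : ℕ) := by
      have h1K : 1 ≤ K := Nat.one_le_iff_ne_zero.mpr (by omega)
      push_cast [Nat.cast_sub hk', Nat.cast_sub h1K]; ring
    rw [hc]
    have h3 : ((K : ℝ) - 1 - (k : ℕ)) * δ' ≤ t - u := by nlinarith
    calc ((K : ℝ) - 1 - (k : ℕ)) * δ' ≤ t - u := h3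
      _ ≤ |u - t| := by rw [abs_sub_comm]; exact le_abs_self _

lemma cover_graph (f : ℝ → ℝ) {t δ' r : ℝ} (hδ' : 0 < δ') {K : ℕ} (hK : 1 ≤ K)
    (hKr : r ≤ K * δ') (M : Fin (2 * K) → ℝ)
    (hosc : ∀ k : Fin (2 * K), ∀ u ∈ Icc (colC t δ' K k) (colC t δ' K k + δ'),
      |f u - f (colC t δ' K k)| ≤ M k) :
    graphE f (Icc (t - r) (t + r)) ⊆
      ⋃ (q : Σ k : Fin (2 * K), Fin (⌈2 * M k / δ'⌉₊ + 1)),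
        boxE (colC t δ' K q.1) (colC t δ' K q.1 + δ')
          (f (colC t δ' K q.1) - M q.1 + (q.2 : ℝ) * δ')
          (f (colC t δ' K q.1) - M q.1 + ((q.2 : ℝ) + 1) * δ') := by
  rintro p ⟨u, hu, hp⟩
  obtain rfl : p = WithLp.toLp 2 ![u, f u] := by rw [← hp]
  have hut : -((K : ℝ) * δ') ≤ u - t ∧ u - t ≤ (K : ℝ) * δ' := by
    constructor <;> [linarith [hu.1]; linarith [hu.2]]
  set z : ℤ := ⌊(u - t) / δ'⌋ with hz
  have hzge : -(K : ℤ) ≤ z := by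
    rw [hz, Int.le_floor]
    push_cast
    rw [le_div_iff₀ hδ']
    linarith [hut.1]
  set zc : ℤ := max (-(K : ℤ)) (min z ((K : ℤ) - 1)) with hzc
  have hzc_lb : -(K : ℤ) ≤ zc := le_max_left _ _
  have hzc_ub : zc ≤ (K : ℤ) - 1 := by
    apply max_le _ (min_le_right _ _)
    omega
  have hknat : (zc + K).toNat < 2 * K := by omega
  set k : Fin (2 * K) := ⟨(zc + K).toNat, hknat⟩ with hkdef
  have hck : colC t δ' K k = t + (zc : ℝ) * δ' := by
    have h1 : (((zc + K).toNat : ℕ) : ℝ) = ((zc : ℝ) + K) := by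
      have := Int.toNat_of_nonneg (show (0:ℤ) ≤ zc + K by omega)
      exact_mod_cast congrArg (Int.cast : ℤ → ℝ) this
    simp only [colC, hkdef, h1]
    ring
  have humem : u ∈ Icc (colC t δ' K k) (colC t δ' K k + δ') := by
    rw [hck]
    by_cases hzK : z ≤ (K : ℤ) - 1
    · have hzceq : zc = z := by omega
      rw [hzceq]
      have hfl : ((z : ℝ)) ≤ (u - t) / δ' := Int.floor_le _
      have hfl2 : (u - t) / δ' < (z : ℝ) + 1 := Int.lt_floor_add_one _
      rw [le_div_iff₀ hδ'] at hfl
      rw [div_lt_iff₀ hδ'] at hfl2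
      constructor <;> nlinarith
    · push_neg at hzK
      have hz' : (K : ℤ) ≤ z := by omega
      have hzceq : zc = (K : ℤ) - 1 := by omega
      have hge : ((K : ℝ)) ≤ (u - t) / δ' := by
        calc ((K : ℝ)) ≤ (z : ℝ) := by exact_mod_cast hz'
          _ ≤ (u - t) / δ' := Int.floor_le _
      rw [le_div_iff₀ hδ'] at hge
      have hEq : u - t = (K : ℝ) * δ' := le_antisymm hut.2 hge
      rw [hzceq]
      constructor <;> push_cast <;> nlinarith
  have hM0 : 0 ≤ M k := by
    have h := hosc k (colC t δ' K k) ⟨le_rfl, by linarith⟩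
    simpa using le_trans (abs_nonneg _) h
  have hfu : |f u - f (colC t δ' K k)| ≤ M k := hosc k u humem
  set y : ℝ := f u - (f (colC t δ' K k) - M k) with hy
  have habs := abs_le.mp hfu
  have hy0 : 0 ≤ y := by simp only [hy]; linarith [habs.1]
  have hy2 : y ≤ 2 * M k := by simp only [hy]; linarith [habs.2]
  have hjlt : ⌊y / δ'⌋₊ < ⌈2 * M k / δ'⌉₊ + 1 := by
    have h1 : ⌊y / δ'⌋₊ ≤ ⌊2 * M k / δ'⌋₊ :=
      Nat.floor_le_floor ((div_le_div_iff_of_pos_right hδ').mpr hy2)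
    exact lt_of_le_of_lt (h1.trans (Nat.floor_le_ceil _)) (Nat.lt_succ_self _)
  refine mem_iUnion.mpr ⟨⟨k, ⟨⌊y / δ'⌋₊, hjlt⟩⟩, ?_, ?_⟩
  · simpa using humem
  · have hj1 : (⌊y / δ'⌋₊ : ℝ) * δ' ≤ y := by
      have h := Nat.floor_le (div_nonneg hy0 hδ'.le)
      calc (⌊y / δ'⌋₊ : ℝ) * δ' ≤ (y / δ') * δ' := by nlinarith
        _ = y := div_mul_cancel₀ _ hδ'.ne'
    have hj2 : y ≤ ((⌊y / δ'⌋₊ : ℝ) + 1) * δ' := by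
      have h := (Nat.lt_floor_add_one (y / δ')).le
      calc y = (y / δ') * δ' := (div_mul_cancel₀ _ hδ'.ne').symm
        _ ≤ ((⌊y / δ'⌋₊ : ℝ) + 1) * δ' := by nlinarith
    have hfu' : (WithLp.toLp 2 ![u, f u] : EuclideanSpace ℝ (Fin 2)) 1 = f u := rfl
    rw [hfu']
    constructor <;> simp only [hy] at hj1 hj2 <;> linarith

lemma osc_col (f : ℝ → ℝ) {t σ C ρ δ' : ℝ} (hC : 0 < C) (hσ0 : 0 < σ)
    (hδ' : 0 < δ') {K : ℕ} (hK : 1 ≤ K) (hKρ : (K : ℝ) * δ' < ρ)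
    (hb : ∀ u ∈ Metric.ball t ρ, ∀ v ∈ Metric.ball t ρ, (u, v) ≠ (t, t) →
      |f u - f v| ≤ C * |u - v| ^ σ * (|u - t| + |v - t|) ^ (-(1 : ℝ)))
    (hcent : ∀ u ∈ Icc (t - δ') (t + δ'), ∀ v ∈ Icc (t - δ') (t + δ'),
      |f u - f v| ≤ δ' ^ (σ - 1 : ℝ))
    (k : Fin (2 * K)) :
    ∀ u ∈ Icc (colC t δ' K k) (colC t δ' K k + δ'),
      |f u - f (colC t δ' K k)| ≤ colM C σ δ' (colN K k) := by
  intro u hu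
  have hcmem : colC t δ' K k ∈ Icc (colC t δ' K k) (colC t δ' K k + δ') :=
    ⟨le_rfl, by linarith⟩
  by_cases hn : colN K k = 0
  · rw [hn, colM, if_pos rfl]
    have hkK : (k : ℕ) = K ∨ ((k : ℕ) = K - 1 ∧ 1 ≤ K) := by
      unfold colN at hn; split at hn <;> omega
    have hsub : Icc (colC t δ' K k) (colC t δ' K k + δ') ⊆ Icc (t - δ') (t + δ') := by
      rcases hkK with h | ⟨h, h1⟩
      · have : colC t δ' K k = t := by simp [colC, h]
        rw [this]; intro x hx; exact ⟨by linarith [hx.1], hx.2⟩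
      · have : colC t δ' K k = t - δ' := by
          simp only [colC, h, Nat.cast_sub hK]; push_cast; ring
        rw [this]; intro x hx
        refine ⟨hx.1, ?_⟩
        have h2 := hx.2
        linarith
    exact hcent u (hsub hu) _ (hsub hcmem)
  · have hn1 : 1 ≤ colN K k := Nat.one_le_iff_ne_zero.mpr hn
    set n := colN K k with hndef
    have hun : (n : ℝ) * δ' ≤ |u - t| := colN_mul_le_abs hδ' k hu
    have hcn : (n : ℝ) * δ' ≤ |colC t δ' K k - t| := colN_mul_le_abs hδ' k hcmem
    have hnpos : (0 : ℝ) < (n : ℝ) * δ' := by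
      have : (1 : ℝ) ≤ (n : ℝ) := by exact_mod_cast hn1
      nlinarith
    have humem : u ∈ Metric.ball t ρ := by
      rw [Metric.mem_ball, Real.dist_eq]
      exact lt_of_le_of_lt (colC_mem_abs hδ' k hu) hKρ
    have hcball : colC t δ' K k ∈ Metric.ball t ρ := by
      rw [Metric.mem_ball, Real.dist_eq]
      exact lt_of_le_of_lt (colC_mem_abs hδ' k hcmem) hKρ
    have hune : u ≠ t := by
      intro h; rw [h, sub_self, abs_zero] at hun; linarith
    have hpair : (u, colC t δ' K k) ≠ (t, t) := by
      intro h; exact hune (congrArg Prod.fst h)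
    have hmain := hb u humem _ hcball hpair
    have huc : |u - colC t δ' K k| ≤ δ' := by
      rw [abs_le]; constructor <;> [linarith [hu.1]; linarith [hu.2]]
    have h1 : |u - colC t δ' K k| ^ σ ≤ δ' ^ σ :=
      Real.rpow_le_rpow (abs_nonneg _) huc hσ0.le
    have hsum : 2 * ((n : ℝ) * δ') ≤ |u - t| + |colC t δ' K k - t| := by linarith
    have h2 : (|u - t| + |colC t δ' K k - t|) ^ (-(1 : ℝ)) ≤ (2 * ((n : ℝ) * δ'))⁻¹ := by
      rw [Real.rpow_neg_one]
      exact inv_anti₀ (by linarith) hsum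
    calc |f u - f (colC t δ' K k)| ≤ C * |u - colC t δ' K k| ^ σ *
          (|u - t| + |colC t δ' K k - t|) ^ (-(1 : ℝ)) := hmain
      _ ≤ C * δ' ^ σ * (2 * ((n : ℝ) * δ'))⁻¹ := by
          apply mul_le_mul (by nlinarith [Real.rpow_nonneg (abs_nonneg (u - colC t δ' K k)) σ]) h2
            (Real.rpow_nonneg (by positivity) _) (by positivity)
      _ = colM C σ δ' n := by
          rw [colM, if_neg hn, Real.rpow_sub_one hδ'.ne']
          have : ((n : ℝ)) ≠ 0 := by positivity
          field_simp

lemma sum_colN_reindex (g : ℕ → ℝ) (K : ℕ) :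
    ∑ i ∈ Finset.range (2 * K), g (colN K i) = 2 * ∑ n ∈ Finset.range K, g n := by
  rw [two_mul K, Finset.range_eq_Ico,
    ← Finset.sum_Ico_consecutive (fun i => g (colN K i)) (Nat.zero_le K) (Nat.le_add_right K K)]
  have h1 : ∑ i ∈ Finset.Ico 0 K, g (colN K i) = ∑ n ∈ Finset.range K, g n := by
    rw [← Finset.range_eq_Ico]
    rw [← Finset.sum_range_reflect (fun n => g n) K]
    apply Finset.sum_congr rfl
    intro i hi
    have hiK := Finset.mem_range.mp hi
    unfold colN
    rw [if_neg (by omega)]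
  have h2 : ∑ i ∈ Finset.Ico K (K + K), g (colN K i) = ∑ n ∈ Finset.range K, g n := by
    rw [Finset.sum_Ico_eq_sum_range]
    simp only [Nat.add_sub_cancel_left]
    apply Finset.sum_congr rfl
    intro i _
    unfold colN
    rw [if_pos (Nat.le_add_right K i)]
    congr 1
    omega
  rw [h1, h2, Finset.range_eq_Ico]; ring

lemma sum_colM_range {C σ δ' : ℝ} (hC : 0 < C) (hδ' : 0 < δ') {K : ℕ} (hK : 1 ≤ K) :
    ∑ n ∈ Finset.range K, colM C σ δ' n ≤
      δ' ^ (σ - 1 : ℝ) * (1 + C / 2 * (1 + Real.log K)) := by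
  obtain ⟨K', rfl⟩ : ∃ K', K = K' + 1 := ⟨K - 1, by omega⟩
  rw [Finset.sum_range_succ' (colM C σ δ')]
  have h0 : colM C σ δ' 0 = δ' ^ (σ - 1 : ℝ) := if_pos rfl
  have hsucc : ∀ i ∈ Finset.range K', colM C σ δ' (i + 1) =
      δ' ^ (σ - 1 : ℝ) * (C / 2) * ((i : ℝ) + 1)⁻¹ := by
    intro i _
    rw [colM, if_neg (Nat.succ_ne_zero i)]
    push_cast
    field_simp
  rw [Finset.sum_congr rfl hsucc, h0, ← Finset.mul_sum]
  have hharm : ∑ i ∈ Finset.range K', ((i : ℝ) + 1)⁻¹ = ((harmonic K' : ℚ) : ℝ) := by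
    rw [harmonic]
    push_cast
    rfl
  rw [hharm]
  have hlog : ((harmonic K' : ℚ) : ℝ) ≤ 1 + Real.log ((K' + 1 : ℕ) : ℝ) := by
    refine (harmonic_le_one_add_log K').trans ?_
    have hlog2 : Real.log (K' : ℝ) ≤ Real.log ((K' : ℝ) + 1) := by
      rcases Nat.eq_zero_or_pos K' with h | h
      · simp [h]
      · exact Real.log_le_log (by exact_mod_cast h) (by linarith)
    push_cast
    linarith
  have hH : (0 : ℝ) ≤ ((harmonic K' : ℚ) : ℝ) := by
    rw [← hharm]
    apply Finset.sum_nonneg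
    intro i _
    positivity
  have hpos : (0 : ℝ) < δ' ^ (σ - 1 : ℝ) := Real.rpow_pos_of_pos hδ' _
  have hkey := mul_le_mul_of_nonneg_left hlog
    (show (0:ℝ) ≤ δ' ^ (σ - 1 : ℝ) * (C / 2) by positivity)
  nlinarith [hkey, hpos, hC]

lemma main_count (f : ℝ → ℝ) {t σ C ρ r δ : ℝ} (hC : 0 < C) (hσ0 : 0 < σ)
    (hr : 0 < r) (hδ0 : 0 < δ) (hball : r + δ / 2 < ρ)
    (hb : ∀ u ∈ Metric.ball t ρ, ∀ v ∈ Metric.ball t ρ, (u, v) ≠ (t, t) →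
      |f u - f v| ≤ C * |u - v| ^ σ * (|u - t| + |v - t|) ^ (-(1 : ℝ)))
    (hcent : ∀ u ∈ Icc (t - δ / 2) (t + δ / 2), ∀ v ∈ Icc (t - δ / 2) (t + δ / 2),
      |f u - f v| ≤ (δ / 2) ^ (σ - 1 : ℝ)) :
    (coverNum (graphE f (Icc (t - r) (t + r))) δ : ℝ) ≤
      4 * (r / (δ / 2) + 1) +
        4 * (δ / 2) ^ (σ - 2 : ℝ) * (1 + C / 2 * (1 + Real.log (r / (δ / 2) + 1))) := by
  set δ' := δ / 2 with hδ'def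
  have hδ' : 0 < δ' := by positivity
  set K := ⌈r / δ'⌉₊ with hKdef
  have hK1 : 1 ≤ K := Nat.one_le_iff_ne_zero.mpr (Nat.ceil_pos.mpr (by positivity)).ne'
  have hKr : r ≤ K * δ' := by
    have := Nat.le_ceil (r / δ')
    calc r = r / δ' * δ' := (div_mul_cancel₀ _ hδ'.ne').symm
      _ ≤ K * δ' := by nlinarith
  have hKub : (K : ℝ) ≤ r / δ' + 1 := (Nat.ceil_lt_add_one (by positivity)).le
  have hKρ : (K : ℝ) * δ' < ρ := by
    have : (K : ℝ) * δ' ≤ r + δ' := by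
      calc (K : ℝ) * δ' ≤ (r / δ' + 1) * δ' := by nlinarith
        _ = r + δ' := by field_simp
    linarith
  set M : Fin (2 * K) → ℝ := fun k => colM C σ δ' (colN K k) with hMdef
  have hosc := fun k => osc_col f hC hσ0 hδ' hK1 hKρ hb hcent k
  have hcov := cover_graph f hδ' hK1 hKr M hosc
  have hdiam : ∀ q : Σ k : Fin (2 * K), Fin (⌈2 * M k / δ'⌉₊ + 1),
      Metric.diam (boxE (colC t δ' K q.1) (colC t δ' K q.1 + δ')
        (f (colC t δ' K q.1) - M q.1 + (q.2 : ℝ) * δ')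
        (f (colC t δ' K q.1) - M q.1 + ((q.2 : ℝ) + 1) * δ')) ≤ δ := by
    intro q
    apply diam_boxE hδ0.le <;> linarith [hδ'def.le, hδ'def.ge]
  have hcard := coverNum_le_card _ hcov hdiam
  have hcardeq : Fintype.card (Σ k : Fin (2 * K), Fin (⌈2 * M k / δ'⌉₊ + 1)) =
      ∑ k : Fin (2 * K), (⌈2 * M k / δ'⌉₊ + 1) := by
    simp [Fintype.card_sigma]
  rw [hcardeq] at hcard
  have hstep : ((∑ k : Fin (2 * K), (⌈2 * M k / δ'⌉₊ + 1) : ℕ) : ℝ) ≤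
      (2 / δ') * (∑ k : Fin (2 * K), M k) + 2 * (2 * K) := by
    have h1 : ((∑ k : Fin (2 * K), (⌈2 * M k / δ'⌉₊ + 1) : ℕ) : ℝ) =
        ∑ k : Fin (2 * K), ((⌈2 * M k / δ'⌉₊ : ℝ) + 1) := by push_cast; rfl
    rw [h1]
    have h2 : ∀ k ∈ Finset.univ (α := Fin (2 * K)),
        ((⌈2 * M k / δ'⌉₊ : ℝ) + 1) ≤ (2 / δ') * M k + 2 := by
      intro k _
      have hMk : 0 ≤ M k := colM_nonneg hC hδ' _
      have h3 : (0 : ℝ) ≤ 2 * M k / δ' := by positivity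
      have h4 := (Nat.ceil_lt_add_one h3).le
      have h5 : 2 * M k / δ' = (2 / δ') * M k := by ring
      linarith
    refine (Finset.sum_le_sum h2).trans ?_
    rw [Finset.sum_add_distrib, ← Finset.mul_sum]
    simp only [Finset.sum_const, Finset.card_univ, Fintype.card_fin, nsmul_eq_mul]
    push_cast
    linarith
  have hMsum2 : ∑ k : Fin (2 * K), M k ≤
      2 * (δ' ^ (σ - 1 : ℝ) * (1 + C / 2 * (1 + Real.log K))) := by
    rw [hMdef]
    rw [Fin.sum_univ_eq_sum_range (fun i => colM C σ δ' (colN K i)) (2 * K)]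
    rw [sum_colN_reindex (colM C σ δ') K]
    have := sum_colM_range (σ := σ) hC hδ' hK1
    linarith
  have hrpow : δ' ^ (σ - 2 : ℝ) = δ' ^ (σ - 1 : ℝ) / δ' := by
    rw [show (σ - 2 : ℝ) = (σ - 1) - 1 by ring, Real.rpow_sub_one hδ'.ne']
  have hlogK : Real.log K ≤ Real.log (r / δ' + 1) := by
    apply Real.log_le_log (by exact_mod_cast hK1) hKub
  have hpow1 : (0 : ℝ) < δ' ^ (σ - 1 : ℝ) := Real.rpow_pos_of_pos hδ' _
  calc (coverNum (graphE f (Icc (t - r) (t + r))) δ : ℝ)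
      ≤ ((∑ k : Fin (2 * K), (⌈2 * M k / δ'⌉₊ + 1) : ℕ) : ℝ) := by exact_mod_cast hcard
    _ ≤ (2 / δ') * (∑ k : Fin (2 * K), M k) + 2 * (2 * K) := hstep
    _ ≤ (2 / δ') * (2 * (δ' ^ (σ - 1 : ℝ) * (1 + C / 2 * (1 + Real.log K)))) + 4 * K := by
        have h2δ' : (0 : ℝ) < 2 / δ' := by positivity
        nlinarith [hMsum2]
    _ ≤ 4 * (r / δ' + 1) +
        4 * δ' ^ (σ - 2 : ℝ) * (1 + C / 2 * (1 + Real.log (r / δ' + 1))) := by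
        rw [hrpow]
        have hA : (2 / δ') * (2 * (δ' ^ (σ - 1 : ℝ) * (1 + C / 2 * (1 + Real.log K)))) =
            4 * (δ' ^ (σ - 1 : ℝ) / δ') * (1 + C / 2 * (1 + Real.log K)) := by
          field_simp
          ring
        rw [hA]
        have hfac : (0 : ℝ) ≤ 4 * (δ' ^ (σ - 1 : ℝ) / δ') := by positivity
        have hmono : 4 * (δ' ^ (σ - 1 : ℝ) / δ') * (1 + C / 2 * (1 + Real.log K)) ≤
            4 * (δ' ^ (σ - 1 : ℝ) / δ') * (1 + C / 2 * (1 + Real.log (r / δ' + 1))) := by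
          apply mul_le_mul_of_nonneg_left _ hfac
          nlinarith [hlogK, hC]
        have h4K : (4 : ℝ) * K ≤ 4 * (r / δ' + 1) := by nlinarith [hKub]
        linarith

lemma tendsto_rpow_zero' {p : ℝ} (hp : 0 < p) :
    Tendsto (fun δ : ℝ => δ ^ (p : ℝ)) (𝓝[>] (0:ℝ)) (𝓝 0) := by
  have h1 : Tendsto (fun δ : ℝ => Real.log δ * p) (𝓝[>] (0:ℝ)) atBot :=
    Real.tendsto_log_nhdsGT_zero.atBot_mul_const hp
  have h2 := Real.tendsto_exp_atBot.comp h1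
  apply h2.congr'
  filter_upwards [self_mem_nhdsWithin] with δ hδ
  simp only [Function.comp_apply]
  rw [Real.rpow_def_of_pos hδ]

/-- the explicit counting bound -/
noncomputable def PhiB (C σ ρ : ℝ) (δ : ℝ) : ℝ :=
  4 * (ρ / 4 / (δ / 2) + 1) +
    4 * (δ / 2) ^ (σ - 2 : ℝ) * (1 + C / 2 * (1 + Real.log (ρ / 4 / (δ / 2) + 1)))

lemma eventually_PhiB_le {C σ ρ e : ℝ} (hC : 0 < C) (hσ0 : 0 < σ) (hσ1 : σ < 1)
    (hρ : 0 < ρ) (he : 0 < e) :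
    ∀ᶠ δ : ℝ in 𝓝[>] (0:ℝ), PhiB C σ ρ δ ≤ δ ^ (-(2 - σ + e) : ℝ) := by
  set a : ℝ := 2 - σ + e with ha
  have ha1 : 1 < a := by simp only [ha]; linarith
  set c2 : ℝ := 4 * (2 : ℝ) ^ (2 - σ : ℝ) with hc2
  set c3 : ℝ := 1 + C / 2 * (1 + Real.log (ρ / 2 + 1)) with hc3
  set G : ℝ → ℝ := fun δ =>
    4 * (ρ / 2 + 1) * δ ^ (a - 1 : ℝ) + c2 * c3 * δ ^ (e : ℝ)
      + (c2 * (C / 2)) * (-(Real.log δ * δ ^ (e : ℝ))) with hG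
  have hGt : Tendsto G (𝓝[>] (0:ℝ)) (𝓝 0) := by
    have h1 := (tendsto_rpow_zero' (by linarith : (0:ℝ) < a - 1)).const_mul (4 * (ρ / 2 + 1))
    have h2 := (tendsto_rpow_zero' he).const_mul (c2 * c3)
    have h3 := ((tendsto_log_mul_rpow_nhdsGT_zero he).neg).const_mul (c2 * (C / 2))
    have h4 := (h1.add h2).add h3
    simp only [mul_zero, add_zero, neg_zero] at h4
    exact h4.congr fun x => by simp only [hG]
  have hG1 : ∀ᶠ δ : ℝ in 𝓝[>] (0:ℝ), G δ ≤ 1 := hGt.eventually_le_const one_pos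
  have hmem : Ioo (0:ℝ) 1 ∈ 𝓝[>] (0:ℝ) := Ioo_mem_nhdsGT_of_mem ⟨le_rfl, one_pos⟩
  filter_upwards [hG1, hmem] with δ hGδ hδm
  obtain ⟨hδ0, hδ1⟩ := hδm
  -- key pointwise bound : PhiB * δ^a ≤ G δ
  have harg : ρ / 4 / (δ / 2) = ρ / 2 / δ := by
    field_simp; ring
  have hargle : ρ / 2 / δ + 1 ≤ (ρ / 2 + 1) / δ := by
    have h1 : (ρ / 2 + 1) / δ = ρ / 2 / δ + 1 / δ := by ring
    have h2 : (1:ℝ) ≤ 1 / δ := by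
      rw [le_div_iff₀ hδ0]; linarith
    linarith
  have hargpos : 0 < ρ / 2 / δ + 1 := by positivity
  have hlogle : Real.log (ρ / 4 / (δ / 2) + 1) ≤ Real.log (ρ / 2 + 1) - Real.log δ := by
    rw [harg]
    calc Real.log (ρ / 2 / δ + 1) ≤ Real.log ((ρ / 2 + 1) / δ) :=
          Real.log_le_log hargpos hargle
      _ = Real.log (ρ / 2 + 1) - Real.log δ := Real.log_div (by positivity) hδ0.ne'
  have hpowpos : (0:ℝ) < (δ / 2) ^ (σ - 2 : ℝ) := Real.rpow_pos_of_pos (by positivity) _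
  have hPhile : PhiB C σ ρ δ ≤ 4 * ((ρ / 2 + 1) / δ) +
      4 * (δ / 2) ^ (σ - 2 : ℝ) * (1 + C / 2 * (1 + Real.log (ρ / 2 + 1) - Real.log δ)) := by
    unfold PhiB
    rw [harg]
    have hm : (1 + C / 2 * (1 + Real.log (ρ / 2 / δ + 1))) ≤
        (1 + C / 2 * (1 + Real.log (ρ / 2 + 1) - Real.log δ)) := by
      rw [← harg]
      nlinarith [hlogle, hC]
    nlinarith [hargle, hpowpos, hm, hC]
  -- now multiply by δ^a and compare with G
  have hδa : (0:ℝ) < δ ^ (a : ℝ) := Real.rpow_pos_of_pos hδ0 _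
  have hkey : (4 * ((ρ / 2 + 1) / δ) +
      4 * (δ / 2) ^ (σ - 2 : ℝ) * (1 + C / 2 * (1 + Real.log (ρ / 2 + 1) - Real.log δ)))
        * δ ^ (a : ℝ) = G δ := by
    have e1 : (1 / δ) * δ ^ (a : ℝ) = δ ^ (a - 1 : ℝ) := by
      rw [Real.rpow_sub hδ0, Real.rpow_one]
      ring
    have e2 : (δ / 2) ^ (σ - 2 : ℝ) * δ ^ (a : ℝ) = (2:ℝ) ^ (2 - σ : ℝ) * δ ^ (e : ℝ) := by
      rw [Real.div_rpow hδ0.le (by norm_num : (0:ℝ) ≤ 2)]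
      rw [div_mul_eq_mul_div, ← Real.rpow_add hδ0]
      have : (σ - 2 + a : ℝ) = e := by simp only [ha]; ring
      rw [this]
      rw [show (2 - σ : ℝ) = -(σ - 2) by ring, Real.rpow_neg (by norm_num : (0:ℝ) ≤ 2)]
      field_simp
    simp only [hG, hc2, hc3]
    have e3 : 4 * ((ρ / 2 + 1) / δ) * δ ^ (a:ℝ) = 4 * (ρ / 2 + 1) * ((1/δ) * δ ^ (a:ℝ)) := by
      ring
    calc (4 * ((ρ / 2 + 1) / δ) +
        4 * (δ / 2) ^ (σ - 2 : ℝ) * (1 + C / 2 * (1 + Real.log (ρ / 2 + 1) - Real.log δ)))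
          * δ ^ (a : ℝ)
        = 4 * (ρ / 2 + 1) * ((1/δ) * δ ^ (a:ℝ)) +
          4 * ((δ / 2) ^ (σ - 2 : ℝ) * δ ^ (a:ℝ)) *
            (1 + C / 2 * (1 + Real.log (ρ / 2 + 1) - Real.log δ)) := by ring
      _ = 4 * (ρ / 2 + 1) * δ ^ (a - 1 : ℝ) +
          4 * ((2:ℝ) ^ (2 - σ : ℝ) * δ ^ (e : ℝ)) *
            (1 + C / 2 * (1 + Real.log (ρ / 2 + 1) - Real.log δ)) := by rw [e1, e2]
      _ = _ := by ring
  have hPhiG : PhiB C σ ρ δ * δ ^ (a : ℝ) ≤ G δ := by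
    rw [← hkey]
    exact mul_le_mul_of_nonneg_right hPhile hδa.le
  have hfinal : PhiB C σ ρ δ * δ ^ (a : ℝ) ≤ 1 := hPhiG.trans hGδ
  rw [Real.rpow_neg hδ0.le, ← one_div, le_div_iff₀ hδa]
  exact hfinal

theorem stmt_1 (f : ℝ → ℝ) (hf : Continuous f) (t σ : ℝ) (hσ0 : 0 < σ) (hσ1 : σ < 1)
    (hbound : ∃ C > (0 : ℝ), ∃ ρ > (0 : ℝ),
      ∀ u ∈ Metric.ball t ρ, ∀ v ∈ Metric.ball t ρ, (u, v) ≠ (t, t) →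
        |f u - f v| ≤ C * |u - v| ^ σ * (|u - t| + |v - t|) ^ (-(1 : ℝ))) :
    upperBoxLoc f t ≤ ((2 - σ : ℝ) : EReal) ∧ lowerBoxLoc f t ≤ ((2 - σ : ℝ) : EReal) := by
  obtain ⟨C, hC, ρ, hρ, hb⟩ := hbound
  set L := Filter.limsup (fun δ : ℝ =>
      ((Real.log (coverNum (graphE f (Icc (t - ρ/4) (t + ρ/4))) δ) / (-Real.log δ) : ℝ) : EReal))
      (𝓝[>] (0 : ℝ)) with hL
  have hkey : ∀ e : ℝ, 0 < e → L ≤ ((2 - σ + e : ℝ) : EReal) := by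
    intro e he
    have hcont : ∃ η > (0:ℝ), ∀ x : ℝ, |x - t| < η → |f x - f t| < 1/2 := by
      have h := Metric.continuous_iff.mp hf t (1/2) (by norm_num)
      obtain ⟨η, hη0, hη⟩ := h
      refine ⟨η, hη0, fun x hx => ?_⟩
      have := hη x (by simpa [Real.dist_eq] using hx)
      simpa [Real.dist_eq] using this
    obtain ⟨η, hη0, hη⟩ := hcont
    have hmem : Ioo (0:ℝ) (min (min η 1) (ρ/2)) ∈ 𝓝[>] (0:ℝ) :=
      Ioo_mem_nhdsGT_of_mem ⟨le_rfl, by positivity⟩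
    have hcover : ∀ᶠ δ : ℝ in 𝓝[>] (0:ℝ),
        (coverNum (graphE f (Icc (t - ρ/4) (t + ρ/4))) δ : ℝ) ≤ δ ^ (-(2 - σ + e) : ℝ) := by
      filter_upwards [hmem, eventually_PhiB_le hC hσ0 hσ1 hρ he] with δ hδm hPhi
      obtain ⟨hδ0, hδlt⟩ := hδm
      have hδη : δ < η := lt_of_lt_of_le hδlt (le_trans (min_le_left _ _) (min_le_left _ _))
      have hδ1 : δ < 1 := lt_of_lt_of_le hδlt (le_trans (min_le_left _ _) (min_le_right _ _))
      have hδρ : δ < ρ/2 := lt_of_lt_of_le hδlt (min_le_right _ _)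
      have hcent : ∀ u ∈ Icc (t - δ/2) (t + δ/2), ∀ v ∈ Icc (t - δ/2) (t + δ/2),
          |f u - f v| ≤ (δ/2) ^ (σ - 1 : ℝ) := by
        intro u hu v hv
        have h1 : |f u - f t| < 1/2 := hη u (by
          have : |u - t| ≤ δ/2 := abs_le.mpr ⟨by linarith [hu.1], by linarith [hu.2]⟩
          linarith)
        have h2 : |f v - f t| < 1/2 := hη v (by
          have : |v - t| ≤ δ/2 := abs_le.mpr ⟨by linarith [hv.1], by linarith [hv.2]⟩
          linarith)
        have h3 : (1:ℝ) ≤ (δ/2) ^ (σ - 1 : ℝ) :=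
          Real.one_le_rpow_of_pos_of_le_one_of_nonpos (by positivity) (by linarith)
            (by linarith)
        calc |f u - f v| ≤ |f u - f t| + |f t - f v| := abs_sub_le _ _ _
          _ = |f u - f t| + |f v - f t| := by rw [abs_sub_comm (f t)]
          _ ≤ (δ/2) ^ (σ - 1 : ℝ) := by linarith
      have hmc := main_count f (t := t) (ρ := ρ) hC hσ0
        (by positivity : (0:ℝ) < ρ/4) hδ0 (by linarith : ρ/4 + δ/2 < ρ) hb hcent
      exact hmc.trans hPhi
    have hev2 : ∀ᶠ δ : ℝ in 𝓝[>] (0:ℝ),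
        ((Real.log (coverNum (graphE f (Icc (t - ρ/4) (t + ρ/4))) δ) / (-Real.log δ) : ℝ) : EReal)
          ≤ ((2 - σ + e : ℝ) : EReal) := by
      filter_upwards [hcover, Ioo_mem_nhdsGT_of_mem ⟨le_refl (0:ℝ), one_pos⟩] with δ hN hδm
      obtain ⟨hδ0, hδ1⟩ := hδm
      rw [EReal.coe_le_coe_iff]
      have hlogδ : 0 < -Real.log δ := by
        have := Real.log_neg hδ0 hδ1
        linarith
      have hae : (0:ℝ) < 2 - σ + e := by linarith
      have hlogN : Real.log (coverNum (graphE f (Icc (t - ρ/4) (t + ρ/4))) δ : ℕ) ≤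
          (2 - σ + e) * (-Real.log δ) := by
        rcases Nat.eq_zero_or_pos (coverNum (graphE f (Icc (t - ρ/4) (t + ρ/4))) δ) with h0 | hpos
        · rw [h0]
          simp only [Nat.cast_zero, Real.log_zero]
          positivity
        · have hN1 : (0:ℝ) < (coverNum (graphE f (Icc (t - ρ/4) (t + ρ/4))) δ : ℝ) := by
            exact_mod_cast hpos
          calc Real.log _ ≤ Real.log (δ ^ (-(2 - σ + e) : ℝ)) := Real.log_le_log hN1 hN
            _ = (-(2 - σ + e)) * Real.log δ := Real.log_rpow hδ0 _
            _ = (2 - σ + e) * (-Real.log δ) := by ring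
      rw [div_le_iff₀ hlogδ]
      exact hlogN
    exact limsup_le_of_le (by isBoundedDefault) hev2
  have hLle : L ≤ ((2 - σ : ℝ) : EReal) := by
    by_contra hcon
    push_neg at hcon
    obtain ⟨x, hx1, hx2⟩ := EReal.lt_iff_exists_real_btwn.mp hcon
    have hxgt : 2 - σ < x := by exact_mod_cast hx1
    have hh := hkey (x - (2 - σ)) (by linarith)
    rw [show 2 - σ + (x - (2 - σ)) = x by ring] at hh
    exact absurd (lt_of_le_of_lt hh hx2) (lt_irrefl _)
  have hup : upperBoxLoc f t ≤ ((2 - σ : ℝ) : EReal) := by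
    refine le_trans ?_ hLle
    rw [hL]
    exact iInf₂_le (ρ/4) (by positivity)
  refine ⟨hup, le_trans ?_ hup⟩
  unfold lowerBoxLoc upperBoxLoc
  exact iInf_mono fun r => iInf_mono fun hr => liminf_le_limsup
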